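/- For every integer n ≥ 1 and all i, j ∈ ℤ, the entries of the n-th matrix power satisfy (A^n)_{ij} = (β/α)^{((−1)^{i+n} + (−1)^i)/4} · (αβ)^{(n−1)/2} · Σ_{m=0}^{n−1} C(n−1, m) · a_{i−(n−1−2m), j}, where C(n−1, m) denotes the binomial coefficient. -/

import Mathlib

/-- The dispersal matrix `A = (a_{ij})_{i,j ∈ ℤ}`: `a_{ij} = β` if `j = i ± 1` and `i` even,
`a_{ij} = α` if `j = i ± 1` and `i` odd, and `a_{ij} = 0` otherwise. -/
noncomputable def matA (α β : ℝ) (i j : ℤ) : ℝ :=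
  if j = i + 1 ∨ j = i - 1 then (if Even i then β else α) else 0

/-- Entrywise matrix powers: `(A⁰)_{ij} = δ_{ij}` and `(A^{n+1})_{ij} = Σ_{k ∈ ℤ} (Aⁿ)_{ik} a_{kj}`. -/
noncomputable def matApow (α β : ℝ) : ℕ → ℤ → ℤ → ℝ
  | 0 => fun i j => if i = j then 1 else 0
  | n + 1 => fun i j => ∑' k : ℤ, matApow α β n i k * matA α β k j

/-- Auxiliary indicator sum: `Σ_{m<n} C(n-1,m)·[u = 2m+1 ∨ u = 2m−1]`. -/
noncomputable def Ffun (n : ℕ) (u : ℤ) : ℝ :=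
  ∑ m ∈ Finset.range n,
    ((n-1).choose m : ℝ) * (if u = 2*(m:ℤ)+1 ∨ u = 2*(m:ℤ)-1 then 1 else 0)

lemma Ffun_even (n : ℕ) (u : ℤ) (hu : Even u) : Ffun n u = 0 := by
  unfold Ffun
  apply Finset.sum_eq_zero
  intro m _
  obtain ⟨t, ht⟩ := hu
  rw [if_neg (by omega), mul_zero]

lemma Ffun_rec (n : ℕ) (hn : 1 ≤ n) (v : ℤ) :
    Ffun (n+1) v = Ffun n (v-2) + Ffun n v := by
  obtain ⟨k, rfl⟩ : ∃ k, n = k + 1 := ⟨n - 1, by omega⟩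
  unfold Ffun
  have hsimp : k + 1 + 1 - 1 = k + 1 := rfl
  have hsimp2 : k + 1 - 1 = k := rfl
  rw [hsimp, hsimp2]
  have hL : ∀ m : ℕ, ((k+1).choose (m+1) : ℝ) = (k.choose m : ℝ) + (k.choose (m+1) : ℝ) := by
    intro m; rw [Nat.choose_succ_succ]; push_cast; ring
  rw [Finset.sum_range_succ' (fun m => ((k+1).choose m : ℝ) *
    (if v = 2*(m:ℤ)+1 ∨ v = 2*(m:ℤ)-1 then (1:ℝ) else 0)) (k+1)]
  have h1 : ∑ m ∈ Finset.range (k+1), ((k+1).choose (m+1) : ℝ) *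
      (if v = 2*((m+1:ℕ):ℤ)+1 ∨ v = 2*((m+1:ℕ):ℤ)-1 then (1:ℝ) else 0)
      = ∑ m ∈ Finset.range (k+1), ((k.choose m : ℝ) *
        (if v = 2*((m+1:ℕ):ℤ)+1 ∨ v = 2*((m+1:ℕ):ℤ)-1 then (1:ℝ) else 0)
        + (k.choose (m+1) : ℝ) *
        (if v = 2*((m+1:ℕ):ℤ)+1 ∨ v = 2*((m+1:ℕ):ℤ)-1 then (1:ℝ) else 0)) := by
    apply Finset.sum_congr rfl
    intro m _
    rw [hL m]; ring
  rw [h1, Finset.sum_add_distrib]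
  have h2 : ∑ m ∈ Finset.range (k+1), ((k.choose m : ℝ)) *
      (if v = 2*((m+1:ℕ):ℤ)+1 ∨ v = 2*((m+1:ℕ):ℤ)-1 then (1:ℝ) else 0)
      = ∑ m ∈ Finset.range (k+1), ((k.choose m : ℝ)) *
      (if v - 2 = 2*(m:ℤ)+1 ∨ v - 2 = 2*(m:ℤ)-1 then (1:ℝ) else 0) := by
    apply Finset.sum_congr rfl
    intro m _
    have : (v = 2*((m+1:ℕ):ℤ)+1 ∨ v = 2*((m+1:ℕ):ℤ)-1) ↔
        (v - 2 = 2*(m:ℤ)+1 ∨ v - 2 = 2*(m:ℤ)-1) := by push_cast; omega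
    rw [if_congr this rfl rfl]
  rw [h2]
  rw [Finset.sum_range_succ (fun m => ((k.choose (m+1) : ℝ)) *
      (if v = 2*((m+1:ℕ):ℤ)+1 ∨ v = 2*((m+1:ℕ):ℤ)-1 then (1:ℝ) else 0)) k]
  rw [Nat.choose_succ_self]
  rw [Finset.sum_range_succ' (fun m => ((k.choose m : ℝ)) *
      (if v = 2*(m:ℤ)+1 ∨ v = 2*(m:ℤ)-1 then (1:ℝ) else 0)) k]
  push_cast [Nat.choose_zero_right]
  ring

lemma sum_matA_eq (α β : ℝ) (n : ℕ) (i k : ℤ) :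
    ∑ m ∈ Finset.range n, ((n-1).choose m : ℝ) * matA α β (i - ((n:ℤ) - 1 - 2*(m:ℤ))) k
    = (if Even (i + (n:ℤ) + 1) then β else α) * Ffun n (k - i + (n:ℤ) - 1) := by
  unfold Ffun
  rw [Finset.mul_sum]
  apply Finset.sum_congr rfl
  intro m _
  unfold matA
  have hcond : (k = (i - ((n:ℤ) - 1 - 2*(m:ℤ))) + 1 ∨ k = (i - ((n:ℤ)-1-2*(m:ℤ))) - 1) ↔
      (k - i + (n:ℤ) - 1 = 2*(m:ℤ)+1 ∨ k - i + (n:ℤ) - 1 = 2*(m:ℤ)-1) := by omega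
  have hpar : Even (i - ((n:ℤ) - 1 - 2*(m:ℤ))) ↔ Even (i + (n:ℤ) + 1) := by
    simp only [Int.even_iff]; omega
  rw [if_congr hcond rfl rfl, if_congr hpar rfl rfl]
  split_ifs <;> ring

lemma tsum_mul_matA (α β : ℝ) (f : ℤ → ℝ) (j : ℤ) :
    ∑' k : ℤ, f k * matA α β k j
      = f (j-1) * matA α β (j-1) j + f (j+1) * matA α β (j+1) j := by
  rw [tsum_eq_sum (s := {j-1, j+1}) ?_]
  · rw [Finset.sum_insert (by simp; omega), Finset.sum_singleton]
  · intro k hk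
    simp only [Finset.mem_insert, Finset.mem_singleton] at hk
    push_neg at hk
    obtain ⟨h1, h2⟩ := hk
    have : matA α β k j = 0 := by
      unfold matA
      rw [if_neg (by omega)]
    rw [this, mul_zero]

lemma matA_left (α β : ℝ) (j : ℤ) : matA α β (j-1) j = if Even (j-1) then β else α := by
  unfold matA
  rw [if_pos (by omega)]

lemma matA_right (α β : ℝ) (j : ℤ) : matA α β (j+1) j = if Even (j+1) then β else α := by
  unfold matA
  rw [if_pos (by omega)]

lemma halfB {α β : ℝ} (hα : 0 < α) (hβ : 0 < β) :
    (β/α) ^ ((1/2:ℝ)) * (α*β) ^ ((1/2:ℝ)) = β := by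
  rw [← Real.mul_rpow (by positivity) (by positivity),
    show β/α*(α*β) = β^(2:ℕ) by field_simp,
    ← Real.rpow_natCast β 2, ← Real.rpow_mul hβ.le]
  norm_num

lemma halfA {α β : ℝ} (hα : 0 < α) (hβ : 0 < β) :
    (α*β) ^ ((1/2:ℝ)) = (β/α) ^ ((1/2:ℝ)) * α := by
  have : (β/α) ^ ((1/2:ℝ)) * α = (β/α) ^ ((1/2:ℝ)) * (α^(2:ℕ)) ^ ((1/2:ℝ)) := by
    rw [← Real.rpow_natCast α 2, ← Real.rpow_mul hα.le]; norm_num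
  rw [this, ← Real.mul_rpow (by positivity) (by positivity)]
  congr 1
  field_simp

lemma halfC {α β : ℝ} (hα : 0 < α) (hβ : 0 < β) :
    (β/α) ^ ((-(1/2):ℝ)) * (α*β) ^ ((1/2:ℝ)) = α := by
  rw [Real.rpow_neg (by positivity), show β/α = (α/β)⁻¹ by rw [inv_div],
    Real.inv_rpow (by positivity), inv_inv,
    ← Real.mul_rpow (by positivity) (by positivity),
    show α/β*(α*β) = α^(2:ℕ) by field_simp,
    ← Real.rpow_natCast α 2, ← Real.rpow_mul hα.le]
  norm_num

lemma halfD {α β : ℝ} (hα : 0 < α) (hβ : 0 < β) :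
    (α*β) ^ ((1/2:ℝ)) = (β/α) ^ ((-(1/2):ℝ)) * β := by
  have h := halfC hα hβ
  have hne : (β/α) ^ ((-(1/2):ℝ)) ≠ 0 := by positivity
  have h2 : (β/α) ^ ((-(1/2):ℝ)) * ((β/α) ^ ((-(1/2):ℝ)) * β) =
      (β/α) ^ ((-(1/2):ℝ)) * (α*β) ^ ((1/2:ℝ)) := by
    rw [h]
    rw [← mul_assoc, ← Real.rpow_add (by positivity)]
    norm_num
    rw [Real.rpow_neg_one, show ((β/α)⁻¹) = α/β by rw [inv_div]]
    field_simp
  exact (mul_left_cancel₀ hne h2).symm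

lemma const_step (α β : ℝ) (hα : 0 < α) (hβ : 0 < β) (i : ℤ) (n : ℕ) :
    (β/α) ^ ((((-1:ℝ)^(i+(n:ℤ)+1) + (-1:ℝ)^i)/4) : ℝ) * (α*β) ^ (((n:ℝ))/2)
    = (β/α) ^ ((((-1:ℝ)^(i+(n:ℤ)) + (-1:ℝ)^i)/4) : ℝ) * (α*β) ^ ((((n:ℝ)-1)/2))
      * (if Even (i + (n:ℤ) + 1) then β else α) := by
  have hsplit : (α*β) ^ (((n:ℝ))/2) = (α*β) ^ ((((n:ℝ)-1)/2)) * (α*β) ^ ((1/2:ℝ)) := by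
    rw [← Real.rpow_add (by positivity)]
    ring_nf
  rw [hsplit]
  rcases Int.even_or_odd i with hi | hi <;> rcases Int.even_or_odd (i + (n:ℤ)) with hin | hin
  · rw [hi.neg_one_zpow, hin.neg_one_zpow, (hin.add_one).neg_one_zpow,
      if_neg (by rw [Int.even_add_one]; exact fun h => h hin)]
    rw [show ((-1:ℝ)+1)/4 = 0 by norm_num, show ((1:ℝ)+1)/4 = 1/2 by norm_num,
      Real.rpow_zero, halfA hα hβ]
    ring
  · rw [hi.neg_one_zpow, hin.neg_one_zpow,
      (by simpa using hin.add_one : Even (i+(n:ℤ)+1)).neg_one_zpow,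
      if_pos (by simpa using hin.add_one)]
    rw [show ((1:ℝ)+1)/4 = 1/2 by norm_num, show ((-1:ℝ)+1)/4 = 0 by norm_num,
      Real.rpow_zero]
    rw [show (β/α) ^ ((1/2:ℝ)) * ((α*β) ^ ((((n:ℝ)-1)/2)) * (α*β) ^ ((1/2:ℝ)))
        = ((β/α) ^ ((1/2:ℝ)) * (α*β) ^ ((1/2:ℝ))) * (α*β) ^ ((((n:ℝ)-1)/2)) by ring,
      halfB hα hβ]
    ring
  · rw [hi.neg_one_zpow, hin.neg_one_zpow, (hin.add_one).neg_one_zpow,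
      if_neg (by rw [Int.even_add_one]; exact fun h => h hin)]
    rw [show ((-1:ℝ)+(-1))/4 = -(1/2) by norm_num, show ((1:ℝ)+(-1))/4 = 0 by norm_num,
      Real.rpow_zero]
    rw [show (β/α) ^ ((-(1/2):ℝ)) * ((α*β) ^ ((((n:ℝ)-1)/2)) * (α*β) ^ ((1/2:ℝ)))
        = ((β/α) ^ ((-(1/2):ℝ)) * (α*β) ^ ((1/2:ℝ))) * (α*β) ^ ((((n:ℝ)-1)/2)) by ring,
      halfC hα hβ]
    ring
  · rw [hi.neg_one_zpow, hin.neg_one_zpow,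
      (by simpa using hin.add_one : Even (i+(n:ℤ)+1)).neg_one_zpow,
      if_pos (by simpa using hin.add_one)]
    rw [show ((1:ℝ)+(-1))/4 = 0 by norm_num, show ((-1:ℝ)+(-1))/4 = -(1/2) by norm_num,
      Real.rpow_zero, halfD hα hβ]
    ring

/-- For every `n ≥ 1` and all `i, j ∈ ℤ`,
`(Aⁿ)_{ij} = (β/α)^{((−1)^{i+n} + (−1)^i)/4} (αβ)^{(n−1)/2} Σ_{m=0}^{n−1} C(n−1,m) a_{i−(n−1−2m), j}`,
where real exponents are interpreted via the real power function. -/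
theorem matApow_formula
    (α β : ℝ) (hα : 0 < α) (hβ : 0 < β) (n : ℕ) (hn : 1 ≤ n) (i j : ℤ) :
    matApow α β n i j =
      (β / α) ^ ((((-1 : ℝ) ^ (i + (n : ℤ)) + (-1 : ℝ) ^ i) / 4) : ℝ)
        * ((α * β) ^ ((((n : ℝ) - 1) / 2) : ℝ))
        * ∑ m ∈ Finset.range n,
            (Nat.choose (n - 1) m : ℝ) * matA α β (i - ((n : ℤ) - 1 - 2 * (m : ℤ))) j := by
  induction n, hn using Nat.le_induction generalizing j with
  | base =>
    simp only [matApow]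
    rw [tsum_eq_single i (by
      intro b hb
      rw [if_neg (fun h => hb h.symm), zero_mul])]
    rw [if_pos rfl, one_mul]
    have h1 : ((-1:ℝ) ^ (i + ((1:ℕ):ℤ)) + (-1:ℝ)^i)/4 = 0 := by
      push_cast
      rw [zpow_add_one₀ (by norm_num : (-1:ℝ) ≠ 0)]
      ring
    have h2 : (((1:ℕ):ℝ) - 1)/2 = 0 := by norm_num
    rw [h1, h2, Real.rpow_zero, Real.rpow_zero, one_mul, one_mul, Finset.sum_range_one]
    norm_num
  | succ n hn ih =>
    simp only [matApow]
    rw [tsum_mul_matA α β (matApow α β n i) j, ih (j-1), ih (j+1),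
      matA_left, matA_right, sum_matA_eq, sum_matA_eq, sum_matA_eq]
    have e1 : j - 1 - i + (n:ℤ) - 1 = j - i + (n:ℤ) - 2 := by ring
    have e2 : j + 1 - i + (n:ℤ) - 1 = j - i + (n:ℤ) := by ring
    have e3 : j - i + (((n+1:ℕ)):ℤ) - 1 = j - i + (n:ℤ) := by push_cast; ring
    rw [e1, e2, e3]
    rcases Int.even_or_odd (j - i + (n:ℤ)) with hv | hv
    · rw [Ffun_even n _ (by obtain ⟨t,ht⟩ := hv; exact ⟨t-1, by omega⟩),
        Ffun_even n _ hv, Ffun_even (n+1) _ hv]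
      simp
    · have hj1 : (if Even (j-1) then β else α) = (if Even (i + ((n+1:ℕ):ℤ) + 1) then β else α) := by
        have hiff : Even (j-1) ↔ Even (i + ((n+1:ℕ):ℤ) + 1) := by
          rw [Int.odd_iff] at hv
          push_cast
          simp only [Int.even_iff]
          omega
        rw [if_congr hiff rfl rfl]
      have hj2 : (if Even (j+1) then β else α) = (if Even (i + ((n+1:ℕ):ℤ) + 1) then β else α) := by
        have hiff : Even (j+1) ↔ Even (i + ((n+1:ℕ):ℤ) + 1) := by
          rw [Int.odd_iff] at hv
          push_cast
          simp only [Int.even_iff]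
          omega
        rw [if_congr hiff rfl rfl]
      rw [hj1, hj2, Ffun_rec n hn]
      have e4 : i + (((n+1:ℕ)):ℤ) = i + (n:ℤ) + 1 := by push_cast; ring
      have e5 : (((n+1:ℕ)):ℝ) - 1 = (n:ℝ) := by push_cast; ring
      rw [e4, e5, show ((n:ℝ))/2 = ((n:ℝ))/2 from rfl]
      rw [const_step α β hα hβ i n]
      have e6 : i + (n:ℤ) + 1 + 1 = i + (n:ℤ) + 2 := by ring
      have hD' : (if Even (i + (n:ℤ) + 1 + 1) then β else α) = (if Even (i + (n:ℤ) + 1) then β else α) →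
          True := fun _ => trivial
      ring
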